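/- Let T > 0, 0 < α < 1, k ≥ 1 an integer, and 0 < β ≤ 1. Let u ∈ C^{1,β}([0,T]). There exists a constant C > 0 depending only on α, β, k and T (but not on τ or n) such that for every N ∈ ℕ with τ = T/N and every integer n with k ≤ n ≤ N, the L_k-type scheme satisfies |D_t^α u(t_n) − δ̂_τ^α u(t_n)| ≤ C [u']_{C^{0,β}[0,T]} τ^{1+β−α}. -/

import Mathlib

open Set MeasureTheory

/-- `M` is a Hölder bound (with exponent `β`) for `u` on `[0, T]`, i.e.
`[u]_{C^{0,β}[0,T]} ≤ M`; used with the least such `M`, it encodes the Hölder seminorm. -/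
def holderBnd (T β M : ℝ) (u : ℝ → ℝ) : Prop :=
  ∀ x ∈ Set.Icc (0:ℝ) T, ∀ y ∈ Set.Icc (0:ℝ) T, |u x - u y| ≤ M * |x - y| ^ β

/-- The degree-`k` Lagrange interpolant `Π_{k,j} u` of `u` at the `k+1` nodes
`t_{j-k}, …, t_j` (with `t_i = iτ`):
`Π_{k,j}u(s) = Σ_{l=0}^{k} u(t_{j-l}) Π_{i≠l} (s - t_{j-i})/(t_{j-l} - t_{j-i})`. -/
noncomputable def Pik (τ : ℝ) (u : ℝ → ℝ) (k j : ℕ) (s : ℝ) : ℝ :=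
  ∑ l ∈ Finset.range (k + 1), u (((j:ℝ) - (l:ℝ)) * τ) *
    ∏ i ∈ (Finset.range (k + 1)).erase l,
      (s - ((j:ℝ) - (i:ℝ)) * τ) / (((j:ℝ) - (l:ℝ)) * τ - ((j:ℝ) - (i:ℝ)) * τ)

/-- The Caputo fractional derivative of order `α` in integrated form:
`D_t^α u(t) = (1/Γ(1-α)) (u(t)-u(0))/t^α + (α/Γ(1-α)) ∫_0^t (u(t)-u(s))/(t-s)^{α+1} ds`. -/
noncomputable def caputo (α : ℝ) (u : ℝ → ℝ) (t : ℝ) : ℝ :=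
  (1 / Real.Gamma (1 - α)) * (u t - u 0) / t ^ α
    + (α / Real.Gamma (1 - α)) * ∫ s in (0:ℝ)..t, (u t - u s) / (t - s) ^ (α + 1)

/-- The piecewise interpolant `H^n u` of the `L_k`-type scheme: it equals `Π_{j,j} u` on
`(t_{j-1}, t_j)` for `1 ≤ j ≤ k-1` and `Π_{k,j} u` on `(t_{j-1}, t_j)` for `k ≤ j ≤ n`.
(For `s ∈ (t_{j-1}, t_j)` one has `⌈s/τ⌉ = j`.) -/
noncomputable def Lkinterp (τ : ℝ) (u : ℝ → ℝ) (k : ℕ) (s : ℝ) : ℝ :=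
  if ⌈s/τ⌉₊ < k then Pik τ u ⌈s/τ⌉₊ ⌈s/τ⌉₊ s else Pik τ u k ⌈s/τ⌉₊ s

/-- The `L_k`-type approximation `δ̂_τ^α u(t_n) = D_t^α (H^n u)(t_n)` of the Caputo
derivative. -/
noncomputable def Lkapprox (α τ : ℝ) (u : ℝ → ℝ) (k n : ℕ) : ℝ :=
  caputo α (Lkinterp τ u k) ((n:ℝ)*τ)

/-! ### Auxiliary lemmas -/

lemma myftc (T : ℝ) (u u' : ℝ → ℝ)
    (hder : ∀ t ∈ Set.Icc (0:ℝ) T, HasDerivWithinAt u (u' t) (Set.Icc 0 T) t)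
    (hcont' : ContinuousOn u' (Set.Icc 0 T))
    (a c : ℝ) (ha : 0 ≤ a) (hac : a ≤ c) (hc : c ≤ T) :
    ∫ x in a..c, u' x = u c - u a := by
  have hsub : Set.Icc a c ⊆ Set.Icc (0:ℝ) T := Set.Icc_subset_Icc ha hc
  apply intervalIntegral.integral_eq_sub_of_hasDeriv_right_of_le hac
  · exact fun x hx => ((hder x (hsub hx)).continuousWithinAt).mono hsub
  · intro x hx
    have hxm : Set.Icc (0:ℝ) T ∈ nhds x := by
      apply Icc_mem_nhds
      · linarith [hx.1]
      · linarith [hx.2]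
    exact ((hder x ⟨by linarith [hx.1], by linarith [hx.2]⟩).hasDerivAt hxm).hasDerivWithinAt
  · exact (hcont'.mono (by rwa [Set.uIcc_of_le hac])).intervalIntegrable

lemma wBound (T : ℝ) (u u' : ℝ → ℝ)
    (hder : ∀ t ∈ Set.Icc (0:ℝ) T, HasDerivWithinAt u (u' t) (Set.Icc 0 T) t)
    (hcont' : ContinuousOn u' (Set.Icc 0 T))
    (β M : ℝ) (hβ0 : 0 < β) (hM : 0 ≤ M) (hHol : holderBnd T β M u')
    (a c : ℝ) (ha : 0 ≤ a) (hac : a ≤ c) (hc : c ≤ T) :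
    |u a - u c - u' c * (a - c)| ≤ M * (c - a) ^ β * (c - a) := by
  have hsub : Set.Icc a c ⊆ Set.Icc (0:ℝ) T := Set.Icc_subset_Icc ha hc
  have hint : IntervalIntegrable u' volume a c :=
    (hcont'.mono (by rwa [Set.uIcc_of_le hac])).intervalIntegrable
  have key : u a - u c - u' c * (a - c) = -(∫ x in a..c, (u' x - u' c)) := by
    rw [intervalIntegral.integral_sub hint (intervalIntegrable_const),
      myftc T u u' hder hcont' a c ha hac hc, intervalIntegral.integral_const, smul_eq_mul]
    ring
  rw [key, abs_neg]
  have hb : ∀ x ∈ Set.uIoc a c, ‖u' x - u' c‖ ≤ M * (c - a) ^ β := by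
    intro x hx
    rw [Set.uIoc_of_le hac] at hx
    have hx1 : x ∈ Set.Icc (0:ℝ) T := hsub ⟨le_of_lt hx.1, hx.2⟩
    have hc1 : c ∈ Set.Icc (0:ℝ) T := hsub ⟨hac, le_refl c⟩
    calc ‖u' x - u' c‖ ≤ M * |x - c| ^ β := hHol x hx1 c hc1
      _ ≤ M * (c - a) ^ β := by
          apply mul_le_mul_of_nonneg_left _ hM
          apply Real.rpow_le_rpow (abs_nonneg _) _ (le_of_lt hβ0)
          rw [abs_sub_comm, abs_of_nonneg (by linarith [hx.2])]
          linarith [hx.1]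
  calc |∫ x in a..c, (u' x - u' c)| ≤ M * (c - a) ^ β * |c - a| :=
        intervalIntegral.norm_integral_le_of_norm_le_const hb
    _ = M * (c - a) ^ β * (c - a) := by rw [abs_of_nonneg (by linarith)]

lemma Pik_add (τ : ℝ) (f g : ℝ → ℝ) (k j : ℕ) (s : ℝ) :
    Pik τ (fun r => f r + g r) k j s = Pik τ f k j s + Pik τ g k j s := by
  simp [Pik, add_mul, Finset.sum_add_distrib]

lemma Pik_eq_eval (τ : ℝ) (u : ℝ → ℝ) (k j : ℕ) (s : ℝ) :
    Pik τ u k j s = Polynomial.eval s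
      (Lagrange.interpolate (Finset.range (k+1)) (fun i : ℕ => ((j:ℝ) - (i:ℝ)) * τ)
        (fun i => u (((j:ℝ) - (i:ℝ)) * τ))) := by
  rw [Lagrange.interpolate_apply, Polynomial.eval_finset_sum]
  unfold Pik
  refine Finset.sum_congr rfl fun l hl => ?_
  rw [Polynomial.eval_mul, Polynomial.eval_C, Lagrange.basis, Polynomial.eval_prod]
  congr 1
  refine Finset.prod_congr rfl fun i hi => ?_
  rw [Lagrange.basisDivisor, Polynomial.eval_mul, Polynomial.eval_C, Polynomial.eval_sub,
    Polynomial.eval_X, Polynomial.eval_C]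
  ring

lemma nodes_injOn (τ : ℝ) (hτ : τ ≠ 0) (j m : ℕ) :
    Set.InjOn (fun i : ℕ => ((j:ℝ) - (i:ℝ)) * τ) (Finset.range m) := by
  intro x _ y _ h
  simp only at h
  have : (x:ℝ) = (y:ℝ) := by
    have := mul_right_cancel₀ hτ h
    linarith
  exact_mod_cast this

lemma Pik_affine (τ : ℝ) (hτ : τ ≠ 0) (k : ℕ) (hk : 1 ≤ k) (j : ℕ) (a b s : ℝ) :
    Pik τ (fun r => a + b * r) k j s = a + b * s := by
  rw [Pik_eq_eval]
  have hinj := nodes_injOn τ hτ j (k+1)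
  have hdeg : (Polynomial.C a + Polynomial.C b * Polynomial.X : Polynomial ℝ).degree
      < (Finset.range (k+1)).card := by
    rw [Finset.card_range]
    apply lt_of_le_of_lt (Polynomial.degree_add_le _ _)
    have h1 : (Polynomial.C a : Polynomial ℝ).degree ≤ 0 := Polynomial.degree_C_le
    have h2 : (Polynomial.C b * Polynomial.X : Polynomial ℝ).degree ≤ 1 :=
      Polynomial.degree_C_mul_X_le b
    have hlt : (1 : WithBot ℕ) < (k+1 : ℕ) := by
      exact_mod_cast (by omega : 1 < k+1)
    exact max_lt (lt_of_le_of_lt h1 (lt_of_le_of_lt (by norm_num) hlt))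
      (lt_of_le_of_lt h2 hlt)
  have h2 : Lagrange.interpolate (Finset.range (k+1)) (fun i : ℕ => ((j:ℝ)-(i:ℝ))*τ)
      (fun i : ℕ => a + b * (((j:ℝ)-(i:ℝ))*τ)) = Polynomial.C a + Polynomial.C b * Polynomial.X :=
    (Lagrange.eq_interpolate_of_eval_eq (fun i : ℕ => a + b * (((j:ℝ)-(i:ℝ))*τ))
      hinj hdeg (fun i _ => by simp)).symm
  rw [show (fun i : ℕ => (fun r => a + b * r) (((j:ℝ)-(i:ℝ))*τ))
      = (fun i : ℕ => a + b * (((j:ℝ)-(i:ℝ))*τ)) from rfl, h2]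
  simp

set_option maxHeartbeats 1000000 in
lemma interpErr (T τ : ℝ) (hτ : 0 < τ) (k : ℕ) (hk : 1 ≤ k)
    (β M : ℝ) (hβ0 : 0 < β) (hβ1 : β ≤ 1) (hM : 0 ≤ M)
    (u u' : ℝ → ℝ)
    (hder : ∀ t ∈ Set.Icc (0:ℝ) T, HasDerivWithinAt u (u' t) (Set.Icc 0 T) t)
    (hcont' : ContinuousOn u' (Set.Icc 0 T))
    (hHol : holderBnd T β M u')
    (k' j : ℕ) (hk'1 : 1 ≤ k') (hk'k : k' ≤ k) (hk'j : k' ≤ j)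
    (hjT : (j:ℝ) * τ ≤ T)
    (s : ℝ) (hs1 : ((j:ℝ)-1) * τ ≤ s) (hs2 : s ≤ (j:ℝ)*τ) :
    |u s - Pik τ u k' j s| ≤ ((k:ℝ)+1)^(k+4) * M * τ^β * ((j:ℝ)*τ - s) := by
  have hτβ : (0:ℝ) ≤ τ^β := Real.rpow_nonneg (le_of_lt hτ) β
  have htjs : 0 ≤ (j:ℝ)*τ - s := by linarith
  have hK1 : (1:ℝ) ≤ (k:ℝ)+1 := by
    have : (0:ℝ) ≤ (k:ℝ) := Nat.cast_nonneg k
    linarith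
  have hk2 : (2:ℝ) ≤ (k:ℝ)+1 := by
    have : (1:ℝ) ≤ (k:ℝ) := by exact_mod_cast hk
    linarith
  set b : ℝ := u' ((j:ℝ)*τ) with hb
  set w : ℝ → ℝ := fun r => u r - ((u ((j:ℝ)*τ) - b*((j:ℝ)*τ)) + b*r) with hw
  have hPik : Pik τ u k' j s = Pik τ w k' j s + ((u ((j:ℝ)*τ) - b*((j:ℝ)*τ)) + b*s) := by
    have h1 : Pik τ u k' j s
        = Pik τ (fun r => w r + ((u ((j:ℝ)*τ) - b*((j:ℝ)*τ)) + b*r)) k' j s := by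
      congr 1
      funext r
      simp only [hw]
      ring
    rw [h1, Pik_add, Pik_affine τ (ne_of_gt hτ) k' hk'1 j _ b s]
  have hdiff : u s - Pik τ u k' j s = w s - Pik τ w k' j s := by
    have hus : u s = w s + ((u ((j:ℝ)*τ) - b*((j:ℝ)*τ)) + b*s) := by simp only [hw]; ring
    rw [hPik]
    nth_rewrite 1 [hus]
    ring
  have hjτ0 : 0 ≤ (j:ℝ)*τ := by positivity
  have hwbd : ∀ a : ℝ, 0 ≤ a → a ≤ (j:ℝ)*τ →
      |w a| ≤ M * ((j:ℝ)*τ - a)^β * ((j:ℝ)*τ - a) := by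
    intro a ha hatj
    have h2 := wBound T u u' hder hcont' β M hβ0 hM hHol a ((j:ℝ)*τ) ha hatj hjT
    have heq : w a = u a - u ((j:ℝ)*τ) - u' ((j:ℝ)*τ) * (a - (j:ℝ)*τ) := by
      simp only [hw, hb]; ring
    rw [heq]; exact h2
  -- per-term bound
  set B : ℝ := M * ((k:ℝ)+1)^(k+2) * τ^β * ((j:ℝ)*τ - s) with hB
  have hB0 : 0 ≤ B := by positivity
  have hterm : ∀ l ∈ Finset.range (k' + 1), |w (((j:ℝ) - (l:ℝ)) * τ) *
      ∏ i ∈ (Finset.range (k' + 1)).erase l,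
        (s - ((j:ℝ) - (i:ℝ)) * τ) / (((j:ℝ) - (l:ℝ)) * τ - ((j:ℝ) - (i:ℝ)) * τ)| ≤ B := by
    intro l hl
    rcases Nat.eq_zero_or_pos l with hl0 | hlpos
    · subst hl0
      have hz : w (((j:ℝ) - ((0:ℕ):ℝ)) * τ) = 0 := by
        simp only [hw, Nat.cast_zero, sub_zero]
        ring
      rw [hz, zero_mul, abs_zero]
      exact hB0
    · have hlk' : l ≤ k' := by have := Finset.mem_range.mp hl; omega
      have hl1 : (1:ℝ) ≤ (l:ℝ) := by exact_mod_cast hlpos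
      have hlk : (l:ℝ) ≤ (k:ℝ) := by exact_mod_cast le_trans hlk' hk'k
      have hlτpos : 0 < (l:ℝ)*τ := by positivity
      have hjl : (l:ℝ) ≤ (j:ℝ) := by exact_mod_cast le_trans hlk' hk'j
      have hnode0 : 0 ≤ ((j:ℝ) - (l:ℝ)) * τ := by nlinarith
      have hnodetj : ((j:ℝ) - (l:ℝ)) * τ ≤ (j:ℝ)*τ := by nlinarith
      have hwl : |w (((j:ℝ) - (l:ℝ)) * τ)| ≤ M * ((l:ℝ)*τ)^β * ((l:ℝ)*τ) := by
        have h3 := hwbd (((j:ℝ) - (l:ℝ)) * τ) hnode0 hnodetj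
        have heq : (j:ℝ)*τ - ((j:ℝ) - (l:ℝ)) * τ = (l:ℝ)*τ := by ring
        rwa [heq] at h3
      have h0mem : (0:ℕ) ∈ (Finset.range (k' + 1)).erase l :=
        Finset.mem_erase.mpr ⟨by omega, Finset.mem_range.mpr (by omega)⟩
      rw [← Finset.mul_prod_erase _ _ h0mem, abs_mul, abs_mul]
      have hfac0 : |(s - ((j:ℝ) - ((0:ℕ):ℝ)) * τ) / (((j:ℝ) - (l:ℝ)) * τ - ((j:ℝ) - ((0:ℕ):ℝ)) * τ)|
          = ((j:ℝ)*τ - s) / ((l:ℝ)*τ) := by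
        rw [abs_div]
        congr 1
        · rw [abs_sub_comm, abs_of_nonneg]
          · norm_num
          · simp only [Nat.cast_zero, sub_zero]; linarith
        · rw [show ((j:ℝ) - ((0:ℕ):ℝ)) * τ = (j:ℝ)*τ by norm_num,
            show ((j:ℝ) - (l:ℝ)) * τ - (j:ℝ)*τ = -((l:ℝ)*τ) by ring, abs_neg, abs_of_pos hlτpos]
      have hfacs : ∀ i ∈ ((Finset.range (k' + 1)).erase l).erase 0,
          |(s - ((j:ℝ) - (i:ℝ)) * τ) / (((j:ℝ) - (l:ℝ)) * τ - ((j:ℝ) - (i:ℝ)) * τ)|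
            ≤ (k:ℝ)+1 := by
        intro i hi
        have hi0 : i ≠ 0 := (Finset.mem_erase.mp hi).1
        have hil : i ≠ l := (Finset.mem_erase.mp (Finset.mem_erase.mp hi).2).1
        have hirange : i ∈ Finset.range (k'+1) :=
          (Finset.mem_erase.mp (Finset.mem_erase.mp hi).2).2
        have hik' : i ≤ k' := by have := Finset.mem_range.mp hirange; omega
        have hi1 : (1:ℝ) ≤ (i:ℝ) := by exact_mod_cast Nat.one_le_iff_ne_zero.mpr hi0
        have hik : (i:ℝ) ≤ (k:ℝ) := by exact_mod_cast le_trans hik' hk'k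
        rw [abs_div]
        have hnum0 : 0 ≤ s - ((j:ℝ) - (i:ℝ)) * τ := by nlinarith
        have hnum : |s - ((j:ℝ) - (i:ℝ)) * τ| ≤ ((k:ℝ)+1)*τ := by
          rw [abs_of_nonneg hnum0]
          nlinarith
        have hden : τ ≤ |((j:ℝ) - (l:ℝ)) * τ - ((j:ℝ) - (i:ℝ)) * τ| := by
          rw [show ((j:ℝ) - (l:ℝ)) * τ - ((j:ℝ) - (i:ℝ)) * τ = ((i:ℝ)-(l:ℝ))*τ by ring,
            abs_mul, abs_of_pos hτ]
          have h4 : (1:ℤ) ≤ |(i:ℤ) - (l:ℤ)| := Int.one_le_abs (by omega)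
          have h5 : (1:ℝ) ≤ |(i:ℝ) - (l:ℝ)| := by exact_mod_cast h4
          nlinarith
        calc |s - ((j:ℝ) - (i:ℝ)) * τ| / |((j:ℝ) - (l:ℝ)) * τ - ((j:ℝ) - (i:ℝ)) * τ|
            ≤ (((k:ℝ)+1)*τ) / τ := div_le_div₀ (by positivity) hnum hτ hden
          _ = (k:ℝ)+1 := by field_simp
      have hrest : |∏ i ∈ ((Finset.range (k' + 1)).erase l).erase 0,
          (s - ((j:ℝ) - (i:ℝ)) * τ) / (((j:ℝ) - (l:ℝ)) * τ - ((j:ℝ) - (i:ℝ)) * τ)|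
          ≤ ((k:ℝ)+1)^k := by
        rw [Finset.abs_prod]
        have hcard : (((Finset.range (k' + 1)).erase l).erase 0).card ≤ k := by
          have h6 : ((Finset.range (k' + 1)).erase l).card = k' := by
            rw [Finset.card_erase_of_mem hl, Finset.card_range]
            omega
          calc (((Finset.range (k' + 1)).erase l).erase 0).card
              ≤ ((Finset.range (k' + 1)).erase l).card := Finset.card_erase_le
            _ = k' := h6
            _ ≤ k := hk'k
        calc ∏ i ∈ ((Finset.range (k' + 1)).erase l).erase 0,
            |(s - ((j:ℝ) - (i:ℝ)) * τ) / (((j:ℝ) - (l:ℝ)) * τ - ((j:ℝ) - (i:ℝ)) * τ)|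
            ≤ ∏ _i ∈ ((Finset.range (k' + 1)).erase l).erase 0, ((k:ℝ)+1) :=
              Finset.prod_le_prod (fun i _ => abs_nonneg _) hfacs
          _ = ((k:ℝ)+1)^(((Finset.range (k' + 1)).erase l).erase 0).card :=
              Finset.prod_const _
          _ ≤ ((k:ℝ)+1)^k := pow_le_pow_right₀ hK1 hcard
      calc |w (((j:ℝ) - (l:ℝ)) * τ)|
            * (|(s - ((j:ℝ) - ((0:ℕ):ℝ)) * τ) / (((j:ℝ) - (l:ℝ)) * τ - ((j:ℝ) - ((0:ℕ):ℝ)) * τ)|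
            * |∏ i ∈ ((Finset.range (k' + 1)).erase l).erase 0,
              (s - ((j:ℝ) - (i:ℝ)) * τ) / (((j:ℝ) - (l:ℝ)) * τ - ((j:ℝ) - (i:ℝ)) * τ)|)
          ≤ (M * ((l:ℝ)*τ)^β * ((l:ℝ)*τ))
            * ((((j:ℝ)*τ - s) / ((l:ℝ)*τ)) * ((k:ℝ)+1)^k) := by
            refine mul_le_mul hwl ?_ ?_ ?_
            · rw [hfac0]
              exact mul_le_mul_of_nonneg_left hrest (div_nonneg htjs (le_of_lt hlτpos))
            · positivity
            · positivity
        _ = M * ((l:ℝ)*τ)^β * ((k:ℝ)+1)^k * ((j:ℝ)*τ - s) := by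
            field_simp
        _ ≤ M * (((k:ℝ)+1)*τ)^β * ((k:ℝ)+1)^k * ((j:ℝ)*τ - s) := by
            gcongr
            all_goals nlinarith
        _ ≤ M * (((k:ℝ)+1)*τ^β) * ((k:ℝ)+1)^k * ((j:ℝ)*τ - s) := by
            gcongr
            rw [Real.mul_rpow (by positivity) (le_of_lt hτ)]
            have h7 : ((k:ℝ)+1)^β ≤ ((k:ℝ)+1)^(1:ℝ) :=
              Real.rpow_le_rpow_of_exponent_le hK1 hβ1
            rw [Real.rpow_one] at h7
            apply mul_le_mul_of_nonneg_right h7 hτβ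
        _ = M * ((k:ℝ)+1)^(k+1) * τ^β * ((j:ℝ)*τ - s) := by rw [pow_succ]; ring
        _ ≤ B := by
            rw [hB]
            gcongr
            all_goals first | exact hK1 | norm_num
  have hsum : |Pik τ w k' j s| ≤ ((k:ℝ)+1) * B := by
    unfold Pik
    refine le_trans (Finset.abs_sum_le_sum_abs _ _) (le_trans (Finset.sum_le_sum hterm) ?_)
    rw [Finset.sum_const, Finset.card_range, nsmul_eq_mul]
    have h8 : ((k'+1:ℕ):ℝ) ≤ (k:ℝ)+1 := by exact_mod_cast Nat.succ_le_succ hk'k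
    nlinarith
  have hws : |w s| ≤ M * τ^β * ((j:ℝ)*τ - s) := by
    have hs0 : 0 ≤ s := by
      have h9 : (1:ℝ) ≤ (j:ℝ) := by exact_mod_cast le_trans hk'1 hk'j
      nlinarith
    have h1 := hwbd s hs0 hs2
    have h2 : ((j:ℝ)*τ - s)^β ≤ τ^β := by
      apply Real.rpow_le_rpow htjs _ (le_of_lt hβ0)
      nlinarith
    calc |w s| ≤ M * ((j:ℝ)*τ - s)^β * ((j:ℝ)*τ - s) := h1
      _ ≤ M * τ^β * ((j:ℝ)*τ - s) := by
          apply mul_le_mul_of_nonneg_right _ htjs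
          exact mul_le_mul_of_nonneg_left h2 hM
  rw [hdiff]
  calc |w s - Pik τ w k' j s| ≤ |w s| + |Pik τ w k' j s| := abs_sub _ _
    _ ≤ M * τ^β * ((j:ℝ)*τ - s) + ((k:ℝ)+1) * B := by linarith
    _ ≤ ((k:ℝ)+1)^(k+4) * M * τ^β * ((j:ℝ)*τ - s) := by
        rw [hB]
        have h10 : (1:ℝ) ≤ ((k:ℝ)+1)^(k+3) := one_le_pow₀ hK1
        have h11 : ((k:ℝ)+1) * (M * ((k:ℝ)+1)^(k+2) * τ^β * ((j:ℝ)*τ - s))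
            = ((k:ℝ)+1)^(k+3) * M * τ^β * ((j:ℝ)*τ - s) := by rw [pow_succ]; ring
        rw [h11]
        have h12 : (1:ℝ) + ((k:ℝ)+1)^(k+3) ≤ ((k:ℝ)+1)^(k+4) := by
          have h13 : ((k:ℝ)+1)^(k+4) = ((k:ℝ)+1) * ((k:ℝ)+1)^(k+3) := by rw [pow_succ]; ring
          nlinarith
        nlinarith [mul_nonneg (mul_nonneg hM hτβ) htjs]


lemma ceil_eq (τ : ℝ) (hτ : 0 < τ) (j : ℕ) (hj : 1 ≤ j) (s : ℝ)
    (h1 : ((j:ℝ)-1)*τ < s) (h2 : s ≤ (j:ℝ)*τ) : ⌈s/τ⌉₊ = j := by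
  rw [Nat.ceil_eq_iff (by omega)]
  constructor
  · have hc : ((j-1 : ℕ):ℝ) = (j:ℝ) - 1 := by
      push_cast [Nat.cast_sub hj]
      ring
    rw [hc, lt_div_iff₀ hτ]
    linarith
  · rw [div_le_iff₀ hτ]
    linarith

lemma Lk_on_piece (τ : ℝ) (hτ : 0 < τ) (u : ℝ → ℝ) (k : ℕ) (j : ℕ) (hj : 1 ≤ j) (s : ℝ)
    (h1 : ((j:ℝ)-1)*τ < s) (h2 : s ≤ (j:ℝ)*τ) :
    Lkinterp τ u k s = if j < k then Pik τ u j j s else Pik τ u k j s := by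
  rw [Lkinterp, ceil_eq τ hτ j hj s h1 h2]

lemma Lk_at_zero (τ : ℝ) (u : ℝ → ℝ) (k : ℕ) (hk : 1 ≤ k) :
    Lkinterp τ u k 0 = u 0 := by
  have h0 : ⌈(0:ℝ)/τ⌉₊ = 0 := by norm_num
  rw [Lkinterp, h0, if_pos (by omega : 0 < k)]
  simp [Pik]



lemma gInt (t α : ℝ) (hα : -1 < -α) (c1 c2 : ℝ) :
    IntervalIntegrable (fun s => (t - s) ^ (-α)) volume c1 c2 := by
  have h := (intervalIntegral.intervalIntegrable_rpow' (a := t - c1) (b := t - c2) hα).comp_sub_left t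
  simpa using h

lemma gcomp (t r : ℝ) (c1 c2 : ℝ) :
    (∫ s in c1..c2, (t - s) ^ r) = ∫ x in (t - c2)..(t - c1), x ^ r := by
  simpa using intervalIntegral.integral_comp_sub_left (fun x => x ^ r) t

-- continuity of Pik in s
lemma Pik_cont (τ : ℝ) (u : ℝ → ℝ) (m j : ℕ) : Continuous (fun s => 
    ∑ l ∈ Finset.range (m + 1), u (((j:ℝ) - (l:ℝ)) * τ) *
    ∏ i ∈ (Finset.range (m + 1)).erase l,
      (s - ((j:ℝ) - (i:ℝ)) * τ) / (((j:ℝ) - (l:ℝ)) * τ - ((j:ℝ) - (i:ℝ)) * τ)) := by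
  apply continuous_finset_sum
  intro l _
  apply Continuous.mul continuous_const
  apply continuous_finset_prod
  intro i _
  exact (continuous_id.sub continuous_const).div_const _

-- φ continuous
lemma phi_cont (t α : ℝ) (hα : 0 < α) : Continuous (fun s : ℝ => (t - s) ^ (α+1)) :=
  (continuous_const.sub continuous_id).rpow_const (fun x => Or.inr (by linarith))

-- division bounds
lemma divBound (t α C : ℝ) (hα0 : 0 < α) (f : ℝ → ℝ) (s : ℝ) (hst : s ≤ t)
    (hf : |f s| ≤ C * (t - s)) : |f s / (t - s)^(α+1)| ≤ C * (t-s)^(-α) := by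
  have hα1 : α + 1 ≠ 0 := by linarith
  rcases eq_or_lt_of_le hst with heq | hlt
  · rw [heq, sub_self, Real.zero_rpow hα1, div_zero, abs_zero,
      Real.zero_rpow (by linarith : -α ≠ 0), mul_zero]
  · have hts : 0 < t - s := by linarith
    have hφ : 0 < (t - s)^(α+1) := Real.rpow_pos_of_pos hts _
    rw [abs_div, abs_of_pos hφ, div_le_iff₀ hφ]
    have hkey : (t - s)^(-α) * (t - s)^(α+1) = t - s := by
      rw [← Real.rpow_add hts]
      norm_num
    rw [mul_assoc, hkey]
    exact hf
lemma divBound2 (t α C : ℝ) (hC : 0 ≤ C) (f : ℝ → ℝ) (s : ℝ) (hst : s < t)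
    (hf : |f s| ≤ C) : |f s / (t - s)^(α+1)| ≤ C * (t-s)^(-(α+1)) := by
  have hts : 0 < t - s := by linarith
  have hφ : 0 < (t - s)^(α+1) := Real.rpow_pos_of_pos hts _
  rw [abs_div, abs_of_pos hφ, Real.rpow_neg (le_of_lt hts), div_eq_mul_inv]
  exact mul_le_mul_of_nonneg_right hf (by positivity)

-- AESM of quotient on Ioc
lemma quotAESM (t α c1 c2 : ℝ) (hα : 0 < α) (v : ℝ → ℝ) (hv : ContinuousOn v (Set.Ioc c1 c2)) :
    AEStronglyMeasurable (fun s => v s / (t - s)^(α+1)) (volume.restrict (Set.Ioc c1 c2)) := by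
  have h1 : AEStronglyMeasurable v (volume.restrict (Set.Ioc c1 c2)) :=
    hv.aestronglyMeasurable measurableSet_Ioc
  have h2 : AEStronglyMeasurable (fun s : ℝ => (t - s) ^ (α+1))
      (volume.restrict (Set.Ioc c1 c2)) := (phi_cont t α hα).aestronglyMeasurable
  have h3 : AEMeasurable (fun s : ℝ => ((t - s)^(α+1))⁻¹) (volume.restrict (Set.Ioc c1 c2)) :=
    h2.aemeasurable.inv
  simp only [div_eq_mul_inv]
  exact h1.mul h3.aestronglyMeasurable


lemma LkErr (T τ : ℝ) (hτ : 0 < τ) (k : ℕ) (hk : 1 ≤ k)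
    (β M : ℝ) (hβ0 : 0 < β) (hβ1 : β ≤ 1) (hM : 0 ≤ M)
    (u u' : ℝ → ℝ)
    (hder : ∀ t ∈ Set.Icc (0:ℝ) T, HasDerivWithinAt u (u' t) (Set.Icc 0 T) t)
    (hcont' : ContinuousOn u' (Set.Icc 0 T))
    (hHol : holderBnd T β M u')
    (j : ℕ) (hj : 1 ≤ j) (hjT : (j:ℝ)*τ ≤ T)
    (s : ℝ) (h1 : ((j:ℝ)-1)*τ < s) (h2 : s ≤ (j:ℝ)*τ) :
    |u s - Lkinterp τ u k s| ≤ ((k:ℝ)+1)^(k+4) * M * τ^β * ((j:ℝ)*τ - s) := by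
  rw [Lk_on_piece τ hτ u k j hj s h1 h2]
  by_cases hjk : j < k
  · rw [if_pos hjk]
    exact interpErr T τ hτ k hk β M hβ0 hβ1 hM u u' hder hcont' hHol j j hj
      (le_of_lt hjk) le_rfl hjT s (le_of_lt h1) h2
  · rw [if_neg hjk]
    exact interpErr T τ hτ k hk β M hβ0 hβ1 hM u u' hder hcont' hHol k j hk
      le_rfl (not_lt.mp hjk) hjT s (le_of_lt h1) h2

set_option maxHeartbeats 2000000 in
theorem stmt15 (T : ℝ) (hT : 0 < T) (α : ℝ) (hα0 : 0 < α) (hα1 : α < 1)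
    (k : ℕ) (hk : 1 ≤ k) (β : ℝ) (hβ0 : 0 < β) (hβ1 : β ≤ 1) :
    ∃ C > 0, ∀ u u' : ℝ → ℝ,
      (∀ t ∈ Set.Icc (0:ℝ) T, HasDerivWithinAt u (u' t) (Set.Icc 0 T) t) →
      ContinuousOn u' (Set.Icc 0 T) →
      ∀ M : ℝ, 0 ≤ M → holderBnd T β M u' →
        ∀ N : ℕ, 0 < N → ∀ τ : ℝ, τ = T / N →
          ∀ n : ℕ, k ≤ n → n ≤ N →
            |caputo α u ((n:ℝ)*τ) - Lkapprox α τ u k n| ≤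
              C * M * τ ^ (1 + β - α) := by
  have hΓ : 0 < Real.Gamma (1 - α) := Real.Gamma_pos_of_pos (by linarith)
  have hC0pos : 0 < ((k:ℝ)+1)^(k+4) := by positivity
  have hGpos : 0 < α / Real.Gamma (1 - α) := by positivity
  have hcoef : 0 < 1/α + 1/(1-α) := by
    have h1 : 0 < 1/α := by positivity
    have h2 : 0 < 1/(1-α) := by
      have : 0 < 1 - α := by linarith
      positivity
    linarith
  refine ⟨(α / Real.Gamma (1 - α)) * ((k:ℝ)+1)^(k+4) * (1/α + 1/(1-α)), by positivity, ?_⟩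
  intro u u' hder hcont' M hM hHol N hN τ hτdef n hkn hnN
  have hNpos : (0:ℝ) < (N:ℝ) := by exact_mod_cast hN
  have hτ : 0 < τ := by rw [hτdef]; positivity
  have hNτ : (N:ℝ) * τ = T := by rw [hτdef]; field_simp
  have hn1 : 1 ≤ n := le_trans hk hkn
  have hn1' : (1:ℝ) ≤ (n:ℝ) := by exact_mod_cast hn1
  set t : ℝ := (n:ℝ) * τ with ht_def
  have ht0 : 0 < t := by rw [ht_def]; nlinarith
  have htT : t ≤ T := by
    rw [ht_def, ← hNτ]
    have h3 : (n:ℝ) ≤ (N:ℝ) := by exact_mod_cast hnN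
    nlinarith
  have hτβ : (0:ℝ) ≤ τ^β := Real.rpow_nonneg hτ.le β
  set C0 : ℝ := ((k:ℝ)+1)^(k+4) with hC0_def
  have hC0M : 0 ≤ C0*M*τ^β := by positivity
  have hu_cont : ContinuousOn u (Set.Icc 0 T) := fun x hx => (hder x hx).continuousWithinAt
  -- the error bound for Lkinterp, in convenient form
  have hC0' : ∀ j : ℕ, 1 ≤ j → j ≤ n → ∀ s : ℝ, ((j:ℝ)-1)*τ < s → s ≤ (j:ℝ)*τ →
      |u s - Lkinterp τ u k s| ≤ C0 * M * τ^β * ((j:ℝ)*τ - s) := by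
    intro j hj hjn s h1 h2
    have hjN : (j:ℝ) ≤ (N:ℝ) := by exact_mod_cast le_trans hjn hnN
    have hjT : (j:ℝ)*τ ≤ T := by rw [← hNτ]; nlinarith
    exact LkErr T τ hτ k hk β M hβ0 hβ1 hM u u' hder hcont' hHol j hj hjT s h1 h2
  -- endpoint values
  have hHut : Lkinterp τ u k t = u t := by
    have h := hC0' n hn1 le_rfl t (by rw [ht_def]; nlinarith) (le_of_eq ht_def)
    rw [ht_def] at h ⊢
    have h0 : |u ((n:ℝ)*τ) - Lkinterp τ u k ((n:ℝ)*τ)| ≤ 0 := by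
      calc |u ((n:ℝ)*τ) - Lkinterp τ u k ((n:ℝ)*τ)|
          ≤ C0 * M * τ^β * ((n:ℝ)*τ - (n:ℝ)*τ) := h
        _ = 0 := by ring
    have := abs_eq_zero.mp (le_antisymm h0 (abs_nonneg _))
    linarith
  have hHu0 : Lkinterp τ u k 0 = u 0 := Lk_at_zero τ u k hk
  -- grid and integrand
  set a : ℕ → ℝ := fun i => (i:ℝ)*τ with ha_def
  have hale : ∀ i : ℕ, a i ≤ a (i+1) := by
    intro i
    simp only [ha_def]
    push_cast
    nlinarith [Nat.cast_nonneg (α := ℝ) i]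
  set d : ℝ → ℝ := fun s => (Lkinterp τ u k s - u s) / (t - s)^(α+1) with hd_def
  -- sub-interval inside [0,T]
  have hpieceSub : ∀ i : ℕ, i < n → Set.Ioc (a i) (a (i+1)) ⊆ Set.Icc (0:ℝ) T := by
    intro i hi x hx
    have hi0 : (0:ℝ) ≤ (i:ℝ) := Nat.cast_nonneg i
    have hiN : ((i:ℝ)+1) ≤ (N:ℝ) := by
      have : (i+1:ℕ) ≤ N := le_trans hi hnN
      exact_mod_cast this
    simp only [ha_def] at hx
    push_cast at hx
    constructor
    · nlinarith [hx.1]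
    · nlinarith [hx.2, hNτ]
  -- piecewise formula on each sub-interval
  have hpiece : ∀ i : ℕ, ∀ s ∈ Set.Ioc (a i) (a (i+1)),
      Lkinterp τ u k s = (if i+1 < k then Pik τ u (i+1) (i+1) s else Pik τ u k (i+1) s) := by
    intro i s hs
    simp only [ha_def] at hs
    have h1 : (((i+1:ℕ):ℝ)-1)*τ < s := by
      push_cast
      have := hs.1
      linarith
    have h2 : s ≤ ((i+1:ℕ):ℝ)*τ := by
      push_cast
      have := hs.2
      push_cast at this
      linarith
    exact Lk_on_piece τ hτ u k (i+1) (by omega) s h1 h2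
  -- pointwise bound on each sub-interval
  have hdbd : ∀ i : ℕ, i < n → ∀ s ∈ Set.Ioc (a i) (a (i+1)),
      |d s| ≤ (C0*M*τ^β) * (t - s)^(-α) := by
    intro i hi s hs
    have hin : ((i:ℝ)+1) ≤ (n:ℝ) := by exact_mod_cast hi
    have hs2' : s ≤ ((i:ℝ)+1)*τ := by
      have := hs.2; simp only [ha_def] at this; push_cast at this; linarith
    have hst : s ≤ t := by rw [ht_def]; nlinarith
    have herr : |(fun s => Lkinterp τ u k s - u s) s| ≤ (C0*M*τ^β) * (t - s) := by
      have h := hC0' (i+1) (by omega) (by omega) s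
        (by push_cast; have := hs.1; simp only [ha_def] at this; linarith)
        (by push_cast; exact hs2')
      rw [abs_sub_comm] at h
      have hstep : ((i+1:ℕ):ℝ)*τ ≤ t := by rw [ht_def]; push_cast; nlinarith
      calc |Lkinterp τ u k s - u s| ≤ C0 * M * τ^β * (((i+1:ℕ):ℝ)*τ - s) := h
        _ ≤ (C0*M*τ^β) * (t - s) := by nlinarith
    exact divBound t α (C0*M*τ^β) hα0 (fun s => Lkinterp τ u k s - u s) s hst herr
  -- integrability on each sub-interval
  have hint : ∀ i, i < n → IntervalIntegrable d volume (a i) (a (i+1)) := by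
    intro i hi
    refine IntervalIntegrable.mono_fun ((gInt t α (by linarith) (a i) (a (i+1))).const_mul
      (C0*M*τ^β)) ?_ ?_
    · rw [Set.uIoc_of_le (hale i)]
      have hPc : Continuous (fun s => (if i+1 < k then Pik τ u (i+1) (i+1) s
          else Pik τ u k (i+1) s)) := by
        by_cases hjk : i+1 < k
        · simp only [if_pos hjk]; exact Pik_cont τ u (i+1) (i+1)
        · simp only [if_neg hjk]; exact Pik_cont τ u k (i+1)
      have hnice := quotAESM t α (a i) (a (i+1)) hα0
        (fun s => (if i+1 < k then Pik τ u (i+1) (i+1) s else Pik τ u k (i+1) s) - u s)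
        ((hPc.continuousOn).sub (hu_cont.mono (hpieceSub i hi)))
      refine hnice.congr ?_
      refine (ae_restrict_iff' measurableSet_Ioc).mpr (Filter.Eventually.of_forall
        fun s hs => ?_)
      simp only [hd_def]
      rw [hpiece i s hs]
    · rw [Set.uIoc_of_le (hale i)]
      refine (ae_restrict_iff' measurableSet_Ioc).mpr (Filter.Eventually.of_forall
        fun s hs => ?_)
      have hb := hdbd i hi s hs
      simp only [Real.norm_eq_abs]
      exact le_trans hb (le_abs_self _)
  have ha0 : a 0 = 0 := by simp [ha_def]
  have han : a n = t := by simp [ha_def, ht_def]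
  have hd_int : IntervalIntegrable d volume 0 t := by
    have h := IntervalIntegrable.trans_iterate (a := a) (n := n) hint
    rwa [ha0, han] at h
  have hsplit : (∫ s in (0:ℝ)..t, d s) = ∑ i ∈ Finset.range n, ∫ s in (a i)..(a (i+1)), d s := by
    rw [intervalIntegral.sum_integral_adjacent_intervals hint, ha0, han]
  -- integrability of the singular comparison kernels on early pieces
  have hg1int : ∀ i : ℕ, i + 1 < n →
      IntervalIntegrable (fun s => (C0*M*τ^β*τ) * (t - s)^(-(α+1))) volume (a i) (a (i+1)) := by
    intro i hi
    apply ContinuousOn.intervalIntegrable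
    intro s hs
    rw [Set.uIcc_of_le (hale i)] at hs
    have hin : ((i:ℝ)+1) ≤ (n:ℝ) - 1 := by
      have : (i:ℕ)+1+1 ≤ n := hi
      have h5 : ((i:ℝ)+1+1) ≤ (n:ℝ) := by exact_mod_cast this
      linarith
    have hst : s < t := by
      have := hs.2; simp only [ha_def] at this; push_cast at this
      rw [ht_def]; nlinarith
    have hne : t - s ≠ 0 := by intro h; rw [sub_eq_zero] at h; linarith
    exact (continuousAt_const.mul (((continuous_const.sub continuous_id).continuousAt).rpow_const
      (Or.inl hne))).continuousWithinAt
  -- bounds on early pieces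
  have hbound1 : ∀ i : ℕ, i + 1 < n → ‖∫ s in (a i)..(a (i+1)), d s‖ ≤
      |∫ s in (a i)..(a (i+1)), (C0*M*τ^β*τ) * (t - s)^(-(α+1))| := by
    intro i hi
    apply intervalIntegral.norm_integral_le_abs_of_norm_le _ (hg1int i hi)
    rw [Set.uIoc_of_le (hale i)]
    refine (ae_restrict_iff' measurableSet_Ioc).mpr (Filter.Eventually.of_forall
      fun s hs => ?_)
    have hin : ((i:ℝ)+1) ≤ (n:ℝ) - 1 := by
      have : (i:ℕ)+1+1 ≤ n := hi
      have h5 : ((i:ℝ)+1+1) ≤ (n:ℝ) := by exact_mod_cast this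
      linarith
    have hs1' : (i:ℝ)*τ < s := by have := hs.1; simp only [ha_def] at this; linarith
    have hs2' : s ≤ ((i:ℝ)+1)*τ := by
      have := hs.2; simp only [ha_def] at this; push_cast at this; linarith
    have hst : s < t := by rw [ht_def]; nlinarith
    have herr : |(fun s => Lkinterp τ u k s - u s) s| ≤ C0*M*τ^β*τ := by
      have h := hC0' (i+1) (by omega) (by omega) s
        (by push_cast; linarith) (by push_cast; exact hs2')
      rw [abs_sub_comm] at h
      calc |Lkinterp τ u k s - u s| ≤ C0 * M * τ^β * (((i+1:ℕ):ℝ)*τ - s) := h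
        _ ≤ C0*M*τ^β*τ := by
            have : ((i+1:ℕ):ℝ)*τ - s ≤ τ := by push_cast; nlinarith
            nlinarith
    rw [Real.norm_eq_abs]
    exact divBound2 t α (C0*M*τ^β*τ) (by positivity)
      (fun s => Lkinterp τ u k s - u s) s hst herr
  -- bound on the last piece
  have hbound2 : ‖∫ s in (a (n-1))..(a n), d s‖ ≤
      |∫ s in (a (n-1))..(a n), (C0*M*τ^β) * (t - s)^(-α)| := by
    have hid : (n-1)+1 = n := by omega
    have h9 : a (n-1) ≤ a n := by
      have := hale (n-1)
      rwa [hid] at this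
    apply intervalIntegral.norm_integral_le_abs_of_norm_le _
      ((gInt t α (by linarith) (a (n-1)) (a n)).const_mul (C0*M*τ^β))
    rw [Set.uIoc_of_le h9]
    refine (ae_restrict_iff' measurableSet_Ioc).mpr (Filter.Eventually.of_forall
      fun s hs => ?_)
    rw [Real.norm_eq_abs]
    exact hdbd (n-1) (by omega) s (by rwa [hid])
  -- summing up
  have habs : |∫ s in (0:ℝ)..t, d s| ≤
      (∑ i ∈ Finset.range (n-1), |∫ s in (a i)..(a (i+1)), (C0*M*τ^β*τ) * (t - s)^(-(α+1))|)
      + |∫ s in (a (n-1))..(a n), (C0*M*τ^β) * (t - s)^(-α)| := by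
    rw [hsplit]
    have hrw : Finset.range n = Finset.range ((n-1)+1) := by rw [show (n-1)+1 = n from by omega]
    rw [hrw, Finset.sum_range_succ]
    have hlast : a ((n-1)+1) = a n := by rw [show (n-1)+1 = n from by omega]
    rw [hlast]
    refine le_trans (abs_add_le _ _) ?_
    refine add_le_add (le_trans (Finset.abs_sum_le_sum_abs _ _) ?_) ?_
    · refine Finset.sum_le_sum fun i hi => ?_
      have h := hbound1 i (by have := Finset.mem_range.mp hi; omega)
      rwa [Real.norm_eq_abs] at h
    · have h := hbound2
      rwa [Real.norm_eq_abs] at h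
  -- evaluate the comparison integrals
  have hτt : τ ≤ t := by rw [ht_def]; nlinarith
  have htan1 : t - a (n-1) = τ := by
    simp only [ha_def]
    rw [ht_def]
    have : ((n-1:ℕ):ℝ) = (n:ℝ) - 1 := by
      rw [Nat.cast_sub hn1]; norm_num
    rw [this]; ring
  have hval1 : (∑ i ∈ Finset.range (n-1),
      |∫ s in (a i)..(a (i+1)), (C0*M*τ^β*τ) * (t - s)^(-(α+1))|)
      ≤ C0*M*τ^β*τ*(τ^(-α)/α) := by
    have hgpos : ∀ i : ℕ, i + 1 < n →
        0 ≤ ∫ s in (a i)..(a (i+1)), (C0*M*τ^β*τ) * (t - s)^(-(α+1)) := by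
      intro i hi
      apply intervalIntegral.integral_nonneg (hale i)
      intro s hs
      have hst : s ≤ t := by
        have hin : ((i:ℝ)+1) ≤ (n:ℝ) := by exact_mod_cast le_of_lt hi
        have := hs.2; simp only [ha_def] at this; push_cast at this
        rw [ht_def]; nlinarith
      have : (0:ℝ) ≤ (t - s)^(-(α+1)) := Real.rpow_nonneg (by linarith) _
      positivity
    have hsum_eq : (∑ i ∈ Finset.range (n-1),
        |∫ s in (a i)..(a (i+1)), (C0*M*τ^β*τ) * (t - s)^(-(α+1))|)
        = ∫ s in (0:ℝ)..(a (n-1)), (C0*M*τ^β*τ) * (t - s)^(-(α+1)) := by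
      have h6 : ∀ i ∈ Finset.range (n-1),
          |∫ s in (a i)..(a (i+1)), (C0*M*τ^β*τ) * (t - s)^(-(α+1))|
          = ∫ s in (a i)..(a (i+1)), (C0*M*τ^β*τ) * (t - s)^(-(α+1)) := by
        intro i hi
        exact abs_of_nonneg (hgpos i (by have := Finset.mem_range.mp hi; omega))
      rw [Finset.sum_congr rfl h6,
        intervalIntegral.sum_integral_adjacent_intervals
          (fun i hi => hg1int i (by omega)), ha0]
    rw [hsum_eq, intervalIntegral.integral_const_mul]
    have hval : (∫ s in (0:ℝ)..(a (n-1)), (t - s)^(-(α+1)))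
        = (τ^(-α) - t^(-α))/α := by
      rw [gcomp, htan1, sub_zero,
        integral_rpow (Or.inr ⟨by intro h; nlinarith [h], Set.notMem_uIcc_of_lt hτ ht0⟩)]
      have he : -(α+1)+1 = -α := by ring
      rw [he]
      field_simp
      ring
    rw [hval]
    have ht_nonneg : 0 ≤ t^(-α) := Real.rpow_nonneg ht0.le _
    have hτα : 0 ≤ τ^(-α) := Real.rpow_nonneg hτ.le _
    have h7 : (τ^(-α) - t^(-α))/α ≤ τ^(-α)/α := by
      gcongr
      linarith
    calc C0*M*τ^β*τ * ((τ^(-α) - t^(-α))/α) ≤ C0*M*τ^β*τ * (τ^(-α)/α) :=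
          mul_le_mul_of_nonneg_left h7 (by positivity)
      _ = C0*M*τ^β*τ*(τ^(-α)/α) := by ring
  have h1α : (0:ℝ) < 1 - α := by linarith
  have hval2 : |∫ s in (a (n-1))..(a n), (C0*M*τ^β) * (t - s)^(-α)|
      ≤ C0*M*τ^β*(τ^(1-α)/(1-α)) := by
    rw [intervalIntegral.integral_const_mul]
    have hval : (∫ s in (a (n-1))..(a n), (t - s)^(-α)) = τ^(1-α)/(1-α) := by
      rw [gcomp, han, sub_self, htan1, integral_rpow (Or.inl (by linarith)),
        Real.zero_rpow (by linarith : -α+1 ≠ 0), show -α+1 = 1-α by ring]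
      ring
    rw [hval, abs_mul, abs_of_nonneg hC0M, abs_of_nonneg
      (div_nonneg (Real.rpow_nonneg hτ.le _) h1α.le)]
  -- power bookkeeping
  have hpow1 : τ^β*(τ*τ^(-α)) = τ^(1+β-α) := by
    have h8 : τ*τ^(-α) = τ^(1-α) := by
      nth_rewrite 1 [← Real.rpow_one τ]
      rw [← Real.rpow_add hτ]
      congr 1
    rw [h8, ← Real.rpow_add hτ]
    congr 1
    ring
  have hpow2 : τ^β*τ^(1-α) = τ^(1+β-α) := by
    rw [← Real.rpow_add hτ]
    congr 1
    ring
  have htotal : |∫ s in (0:ℝ)..t, d s| ≤ C0*M*(1/α+1/(1-α))*τ^(1+β-α) := by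
    calc |∫ s in (0:ℝ)..t, d s|
        ≤ (∑ i ∈ Finset.range (n-1), |∫ s in (a i)..(a (i+1)), (C0*M*τ^β*τ) * (t - s)^(-(α+1))|)
          + |∫ s in (a (n-1))..(a n), (C0*M*τ^β) * (t - s)^(-α)| := habs
      _ ≤ C0*M*τ^β*τ*(τ^(-α)/α) + C0*M*τ^β*(τ^(1-α)/(1-α)) := add_le_add hval1 hval2
      _ = C0*M*(τ^β*(τ*τ^(-α)))*(1/α) + C0*M*(τ^β*τ^(1-α))*(1/(1-α)) := by ring
      _ = C0*M*(1/α+1/(1-α))*τ^(1+β-α) := by rw [hpow1, hpow2]; ring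
  -- the exact part of the Caputo derivative
  obtain ⟨L, hL⟩ := IsCompact.exists_bound_of_continuousOn isCompact_Icc hcont'
  have hulip : ∀ s : ℝ, 0 ≤ s → s ≤ t → |u t - u s| ≤ L*(t - s) := by
    intro s hs0 hst
    rw [← myftc T u u' hder hcont' s t hs0 hst htT]
    have hnorm : ‖∫ x in s..t, u' x‖ ≤ L * |t - s| := by
      apply intervalIntegral.norm_integral_le_of_norm_le_const
      intro x hx
      rw [Set.uIoc_of_le hst] at hx
      exact hL x ⟨by linarith [hx.1], by linarith [hx.2]⟩
    calc |∫ x in s..t, u' x| ≤ L * |t - s| := by rwa [Real.norm_eq_abs] at hnorm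
      _ = L*(t-s) := by rw [abs_of_nonneg (by linarith)]
  have hf1int : IntervalIntegrable (fun s => (u t - u s)/(t - s)^(α+1)) volume 0 t := by
    refine IntervalIntegrable.mono_fun ((gInt t α (by linarith) 0 t).const_mul L) ?_ ?_
    · rw [Set.uIoc_of_le ht0.le]
      exact quotAESM t α 0 t hα0 (fun s => u t - u s)
        (continuousOn_const.sub (hu_cont.mono
          (fun x hx => ⟨le_of_lt hx.1, le_trans hx.2 htT⟩)))
    · rw [Set.uIoc_of_le ht0.le]
      refine (ae_restrict_iff' measurableSet_Ioc).mpr (Filter.Eventually.of_forall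
        fun s hs => ?_)
      simp only [Real.norm_eq_abs]
      exact le_trans (divBound t α L hα0 (fun s => u t - u s) s hs.2
        (hulip s hs.1.le hs.2)) (le_abs_self _)
  have hint2 : (∫ s in (0:ℝ)..t, (u t - Lkinterp τ u k s)/(t-s)^(α+1))
      = (∫ s in (0:ℝ)..t, (u t - u s)/(t-s)^(α+1)) - ∫ s in (0:ℝ)..t, d s := by
    rw [← intervalIntegral.integral_sub hf1int hd_int]
    apply intervalIntegral.integral_congr
    intro s _
    simp only [hd_def]
    rw [div_sub_div_same]
    congr 1
    ring
  have hcap : caputo α u t - Lkapprox α τ u k n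
      = (α/Real.Gamma (1-α)) * ∫ s in (0:ℝ)..t, d s := by
    have hunfold : Lkapprox α τ u k n = caputo α (Lkinterp τ u k) t := rfl
    rw [hunfold, caputo, caputo, hHut, hHu0, hint2]
    ring
  have hgoal : |caputo α u t - Lkapprox α τ u k n|
      ≤ (α / Real.Gamma (1 - α)) * C0 * (1/α + 1/(1-α)) * M * τ ^ (1 + β - α) := by
    rw [hcap, abs_mul, abs_of_pos hGpos]
    calc (α/Real.Gamma (1-α)) * |∫ s in (0:ℝ)..t, d s|
        ≤ (α/Real.Gamma (1-α)) * (C0*M*(1/α+1/(1-α))*τ^(1+β-α)) :=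
          mul_le_mul_of_nonneg_left htotal hGpos.le
      _ = (α / Real.Gamma (1 - α)) * C0 * (1/α + 1/(1-α)) * M * τ ^ (1 + β - α) := by ring
  calc |caputo α u ((n:ℝ)*τ) - Lkapprox α τ u k n|
      = |caputo α u t - Lkapprox α τ u k n| := by rw [← ht_def]
    _ ≤ (α / Real.Gamma (1 - α)) * C0 * (1/α + 1/(1-α)) * M * τ ^ (1 + β - α) := hgoal
    _ = (α / Real.Gamma (1 - α)) * C0 * (1/α + 1/(1-α)) * M * τ ^ (1 + β - α) := rfl
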